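/- Let p be a prime and D ⊂ 𝔽_p a set with |D| odd and |D| ≤ (2p+1)/3. Then the number of pairs (x, y) ∈ D² with x − y ∈ D is at most (3/4)|D|² + 1/4. -/

import Mathlib

set_option maxHeartbeats 2000000


open Finset

section PollardSetup

open Pointwise

variable {p : ℕ} [NeZero p]

/-- number of representations `c = a + b`, `a ∈ A`, `b ∈ B`, indexed by the `B`-element. -/
private def psiCount (A B : Finset (ZMod p)) (c : ZMod p) : ℕ :=
  (B.filter fun b => c - b ∈ A).card

private lemma psi_le (A B : Finset (ZMod p)) (c : ZMod p) : psiCount A B c ≤ B.card :=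
  Finset.card_filter_le _ _

private lemma psi_mass (A B : Finset (ZMod p)) :
    ∑ c : ZMod p, psiCount A B c = A.card * B.card := by
  unfold psiCount
  simp_rw [Finset.card_filter]
  rw [Finset.sum_comm]
  have hinner : ∀ b : ZMod p, (∑ c : ZMod p, if c - b ∈ A then 1 else 0) = A.card := by
    intro b
    rw [← Finset.card_filter]
    have himg : Finset.univ.filter (fun c : ZMod p => c - b ∈ A) = A.image (· + b) := by
      ext c
      simp only [Finset.mem_filter, Finset.mem_univ, true_and, Finset.mem_image]
      constructor
      · intro h; exact ⟨c - b, h, by ring⟩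
      · rintro ⟨a, ha, rfl⟩; simpa using ha
    rw [himg, Finset.card_image_of_injective _ (add_left_injective b)]
  calc ∑ b ∈ B, ∑ c : ZMod p, (if c - b ∈ A then 1 else 0)
      = ∑ b ∈ B, A.card := Finset.sum_congr rfl (fun b _ => hinner b)
  _ = B.card * A.card := by rw [Finset.sum_const, smul_eq_mul]
  _ = A.card * B.card := mul_comm _ _

private lemma psi_lower (A B : Finset (ZMod p)) (c : ZMod p) :
    A.card + B.card ≤ psiCount A B c + p := by
  classical
  set E := A.image (fun a => c - a) with hE
  have hEcard : E.card = A.card := by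
    rw [hE]
    apply Finset.card_image_of_injective
    intro x y hxy
    rwa [sub_right_inj] at hxy
  have hfilter : B.filter (fun b => c - b ∈ A) = B ∩ E := by
    ext b
    simp only [Finset.mem_filter, Finset.mem_inter, hE, Finset.mem_image]
    constructor
    · rintro ⟨hb, hA⟩; exact ⟨hb, c - b, hA, by ring⟩
    · rintro ⟨hb, a, ha, hab⟩
      refine ⟨hb, ?_⟩
      have : c - b = a := by rw [← hab]; ring
      rwa [this]
  have hunion : (B ∪ E).card ≤ p := by
    calc (B ∪ E).card ≤ Fintype.card (ZMod p) := Finset.card_le_univ _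
    _ = p := ZMod.card p
  have h := Finset.card_inter_add_card_union B E
  unfold psiCount
  rw [hfilter]
  omega

/-- The Dyson transform does not increase representation counts. -/
private lemma transform_psi_le (A B : Finset (ZMod p)) (e c : ZMod p) :
    psiCount (A ∪ B.image (· + e)) (B.filter fun b => b + e ∈ A) c ≤ psiCount A B c := by
  classical
  unfold psiCount
  apply Finset.card_le_card_of_injOn (fun b => if c - b ∈ A then b else c - b - e)
  · intro b hb
    simp only [Finset.mem_coe] at hb ⊢
    simp only [Finset.mem_filter, Finset.mem_union, Finset.mem_image] at hb
    obtain ⟨⟨hbB, hbe⟩, hcb⟩ := hb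
    by_cases h : c - b ∈ A
    · rw [if_pos h]
      exact Finset.mem_filter.mpr ⟨hbB, h⟩
    · rw [if_neg h]
      rw [Finset.mem_filter]
      rcases hcb with hcb | ⟨b', hb', hb'e⟩
      · exact absurd hcb h
      · have hb'' : c - b - e = b' := by rw [← hb'e]; ring
        refine ⟨hb'' ▸ hb', ?_⟩
        have : c - (c - b - e) = b + e := by ring
        rw [this]; exact hbe
  · intro b₁ h₁ b₂ h₂ heq
    simp only [Finset.coe_filter, Set.mem_setOf_eq, Finset.mem_filter] at h₁ h₂
    by_cases k₁ : c - b₁ ∈ A <;> by_cases k₂ : c - b₂ ∈ A <;>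
      simp only [k₁, k₂, if_true, if_false] at heq
    · exact heq
    · exfalso
      apply k₂
      have : c - b₂ = b₁ + e := by rw [heq]; ring
      rw [this]; exact h₁.1.2
    · exfalso
      apply k₁
      have : c - b₁ = b₂ + e := by rw [← heq]; ring
      rw [this]; exact h₂.1.2
    · have : c - e - b₁ = c - e - b₂ := by
        calc c - e - b₁ = c - b₁ - e := by ring
        _ = c - b₂ - e := heq
        _ = c - e - b₂ := by ring
      rwa [sub_right_inj] at this
  
private lemma transform_card (A B : Finset (ZMod p)) (e : ZMod p) :
    (A ∪ B.image (· + e)).card + (B.filter fun b => b + e ∈ A).card = A.card + B.card := by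
  classical
  have h1 := Finset.card_union_add_card_inter A (B.image (· + e))
  have h2 : (B.image (· + e)).card = B.card :=
    Finset.card_image_of_injective _ (add_left_injective e)
  have h3 : A ∩ B.image (· + e) = (B.filter fun b => b + e ∈ A).image (· + e) := by
    ext x
    simp only [Finset.mem_inter, Finset.mem_image, Finset.mem_filter]
    constructor
    · rintro ⟨hxA, b, hb, rfl⟩; exact ⟨b, ⟨hb, hxA⟩, rfl⟩
    · rintro ⟨b, ⟨hb, hbe⟩, rfl⟩; exact ⟨hbe, b, hb, rfl⟩
  have h4 : (A ∩ B.image (· + e)).card = (B.filter fun b => b + e ∈ A).card := by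
    rw [h3, Finset.card_image_of_injective _ (add_left_injective e)]
  omega

private lemma compl_psi (A B : Finset (ZMod p)) (c : ZMod p) :
    psiCount Aᶜ B c + psiCount A B c = B.card := by
  classical
  unfold psiCount
  have h : B.filter (fun b => c - b ∈ Aᶜ) = B.filter (fun b => ¬ (c - b ∈ A)) := by
    simp only [Finset.mem_compl]
  rw [h, add_comm]
  exact Finset.card_filter_add_card_filter_not _

private lemma compl_phi (A B : Finset (ZMod p)) (e : ZMod p) :
    (B.filter fun b => b + e ∈ Aᶜ).card + (B.filter fun b => b + e ∈ A).card = B.card := by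
  classical
  have h : B.filter (fun b => b + e ∈ Aᶜ) = B.filter (fun b => ¬ (b + e ∈ A)) := by
    simp only [Finset.mem_compl]
  rw [h, add_comm]
  exact Finset.card_filter_add_card_filter_not _

private lemma card_le_p (A : Finset (ZMod p)) : A.card ≤ p := by
  calc A.card ≤ Fintype.card (ZMod p) := Finset.card_le_univ _
  _ = p := ZMod.card p

/-- **Pollard's theorem** in `ZMod p`, auxiliary induction. -/
private lemma pollard_aux {p : ℕ} [NeZero p] (hp : p.Prime) :
    ∀ (n : ℕ) (A B : Finset (ZMod p)) (t : ℕ), B.card = n → t ≤ A.card → t ≤ B.card →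
      t * min p (A.card + B.card - t) ≤ ∑ c : ZMod p, min t (psiCount A B c) := by
  intro n
  induction n using Nat.strong_induction_on with
  | _ n ih =>
  intro A B t hn htA htB
  classical
  rcases Nat.eq_zero_or_pos t with ht0 | ht1
  · subst ht0; simp
  have hAp : A.card ≤ p := card_le_p A
  have hBp : B.card ≤ p := card_le_p B
  by_cases hcap : p + 1 ≤ A.card + B.card - t
  · -- the "covering" case : every element has at least `t` representations
    have hmin : min p (A.card + B.card - t) = p := by omega
    rw [hmin]
    have hpt : ∀ c : ZMod p, min t (psiCount A B c) = t := by
      intro c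
      have h1 := psi_lower A B c
      have : t ≤ psiCount A B c := by omega
      exact min_eq_left this
    have hsum : ∑ c : ZMod p, min t (psiCount A B c) = ∑ _c : ZMod p, t :=
      Finset.sum_congr rfl (fun c _ => hpt c)
    rw [hsum, Finset.sum_const, Finset.card_univ, ZMod.card, smul_eq_mul]
    exact le_of_eq (mul_comm t p)
  have hsp : A.card + B.card - t ≤ p := by omega
  have hminS : min p (A.card + B.card - t) = A.card + B.card - t := by omega
  rw [hminS]
  rcases eq_or_lt_of_le htB with htB' | htB'
  · -- base case : `|B| = t`
    have hall : ∀ c : ZMod p, min t (psiCount A B c) = psiCount A B c := by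
      intro c
      exact min_eq_right (htB' ▸ psi_le A B c)
    rw [Finset.sum_congr rfl (fun c _ => hall c), psi_mass]
    have h1 : A.card + B.card - t = A.card := by omega
    rw [h1, ← htB', mul_comm]
  -- main case, `t < |B|`, `|A| + |B| - t ≤ p`
  by_cases hex : ∃ e : ZMod p, 1 ≤ (B.filter fun b => b + e ∈ A).card ∧
      (B.filter fun b => b + e ∈ A).card ≤ B.card - 1
  · obtain ⟨e, he1, he2⟩ := hex
    by_cases het : (B.filter fun b => b + e ∈ A).card ≤ t
    · -- low value : transform the pair `(Aᶜ, B)`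
      set A2 := Aᶜ ∪ B.image (· + e) with hA2
      set B2 := B.filter (fun b => b + e ∈ Aᶜ) with hB2
      have hphic := compl_phi A B e
      rw [← hB2] at hphic
      have hsize : A2.card + B2.card = Aᶜ.card + B.card := by
        have h := transform_card Aᶜ B e
        rw [← hA2, ← hB2] at h
        exact h
      have hAc : Aᶜ.card = p - A.card := by
        rw [Finset.card_compl, ZMod.card]
      set v := B.card - t with hv
      have hB2n : B2.card < n := by omega
      have hvA2 : v ≤ A2.card := by omega
      have hvB2 : v ≤ B2.card := by omega
      have hIH := ih B2.card hB2n A2 B2 v rfl hvA2 hvB2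
      have hminIH : min p (A2.card + B2.card - v) = p - A.card + t := by omega
      rw [hminIH] at hIH
      have hchain : v * (p - A.card + t) ≤ ∑ c : ZMod p, min v (psiCount Aᶜ B c) := by
        refine le_trans hIH (Finset.sum_le_sum fun c _ => ?_)
        exact min_le_min le_rfl (transform_psi_le Aᶜ B e c)
      -- identities
      have hsum1 : (∑ c : ZMod p, min v (psiCount Aᶜ B c)) +
          (∑ c : ZMod p, max t (psiCount A B c)) = p * B.card := by
        rw [← Finset.sum_add_distrib]
        have hc : ∀ c : ZMod p, min v (psiCount Aᶜ B c) + max t (psiCount A B c) = B.card := by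
          intro c
          have h1 := compl_psi A B c
          have h2 := psi_le A B c
          omega
        rw [Finset.sum_congr rfl (fun c _ => hc c), Finset.sum_const, Finset.card_univ,
          ZMod.card, smul_eq_mul]
      have hsum2 : (∑ c : ZMod p, max t (psiCount A B c)) +
          (∑ c : ZMod p, min t (psiCount A B c)) = p * t + A.card * B.card := by
        rw [← Finset.sum_add_distrib]
        have hc : ∀ c : ZMod p, max t (psiCount A B c) + min t (psiCount A B c)
            = t + psiCount A B c := by
          intro c; omega
        rw [Finset.sum_congr rfl (fun c _ => hc c), Finset.sum_add_distrib,
          Finset.sum_const, Finset.card_univ, ZMod.card, smul_eq_mul, psi_mass]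
      -- final arithmetic over ℤ
      have hgoal : t * (A.card + B.card - t) ≤ ∑ c : ZMod p, min t (psiCount A B c) := by
        set U := ∑ c : ZMod p, min v (psiCount Aᶜ B c) with hU
        set V := ∑ c : ZMod p, max t (psiCount A B c) with hV
        set S := ∑ c : ZMod p, min t (psiCount A B c) with hS
        have e1 : (U : ℤ) + V = p * B.card := by exact_mod_cast hsum1
        have e2 : (V : ℤ) + S = p * t + A.card * B.card := by exact_mod_cast hsum2
        have e3 : ((B.card : ℤ) - t) * ((p : ℤ) - A.card + t) ≤ U := by
          have : (v : ℤ) * ((p - A.card + t : ℕ) : ℤ) ≤ U := by exact_mod_cast hchain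
          have hv' : (v : ℤ) = (B.card : ℤ) - t := by
            rw [hv]; push_cast [htB'.le]; ring
          have hp' : ((p - A.card + t : ℕ) : ℤ) = (p : ℤ) - A.card + t := by
            push_cast [hAp]; ring
          rwa [hv', hp'] at this
        have e4 : ((A.card + B.card - t : ℕ) : ℤ) = (A.card : ℤ) + B.card - t := by
          push_cast [show t ≤ A.card + B.card by omega]; ring
        have hexp : ((B.card : ℤ) - t) * ((p : ℤ) - A.card + t)
            = (p : ℤ) * B.card - p * t - A.card * B.card + t * A.card + t * B.card - t * t := by
          ring
        have hexp2 : (t : ℤ) * ((A.card : ℤ) + B.card - t)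
            = (t : ℤ) * A.card + t * B.card - t * t := by ring
        have : (t : ℤ) * ((A.card : ℤ) + B.card - t) ≤ S := by
          rw [hexp2]; rw [hexp] at e3; linarith [e1, e2, e3]
        have hfin : (t : ℤ) * ((A.card + B.card - t : ℕ) : ℤ) ≤ S := by rw [e4]; exact this
        exact_mod_cast hfin
      exact hgoal
    · -- high value : classic Dyson transform of `(A, B)`
      push_neg at het
      set A2 := A ∪ B.image (· + e) with hA2
      set B2 := B.filter (fun b => b + e ∈ A) with hB2
      have hsize : A2.card + B2.card = A.card + B.card := by
        have h := transform_card A B e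
        rw [← hA2, ← hB2] at h
        exact h
      have hB2card : B2.card = (B.filter fun b => b + e ∈ A).card := by rw [hB2]
      have hB2n : B2.card < n := by omega
      have htA2 : t ≤ A2.card := le_trans htA (Finset.card_le_card Finset.subset_union_left)
      have htB2 : t ≤ B2.card := by omega
      have hIH := ih B2.card hB2n A2 B2 t rfl htA2 htB2
      have hminIH : min p (A2.card + B2.card - t) = A.card + B.card - t := by omega
      rw [hminIH] at hIH
      refine le_trans hIH (Finset.sum_le_sum fun c _ => ?_)
      exact min_le_min le_rfl (transform_psi_le A B e c)
  · -- no intermediate value : impossible by Cauchy-Davenport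
    exfalso
    push_neg at hex
    set E := Finset.univ.filter (fun e : ZMod p => ∀ b ∈ B, b + e ∈ A) with hE
    have hBne : B.Nonempty := Finset.card_pos.mp (by omega)
    obtain ⟨b₀, hb₀⟩ := hBne
    have hAne : A.Nonempty := Finset.card_pos.mp (by omega)
    have hsub : ∀ a ∈ A, a - b₀ ∈ E := by
      intro a ha
      have h1 : 1 ≤ (B.filter fun b => b + (a - b₀) ∈ A).card := by
        apply Finset.card_pos.mpr
        refine ⟨b₀, Finset.mem_filter.mpr ⟨hb₀, ?_⟩⟩
        have : b₀ + (a - b₀) = a := by ring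
        rw [this]; exact ha
      have h2 : B.card - 1 < (B.filter fun b => b + (a - b₀) ∈ A).card := hex _ h1
      have h3 : B.filter (fun b => b + (a - b₀) ∈ A) = B := by
        apply Finset.eq_of_subset_of_card_le (Finset.filter_subset _ _)
        have := Finset.card_filter_le B (fun b => b + (a - b₀) ∈ A)
        omega
      rw [hE, Finset.mem_filter]
      refine ⟨Finset.mem_univ _, fun b hb => ?_⟩
      have hb' : b ∈ B.filter (fun b => b + (a - b₀) ∈ A) := by rw [h3]; exact hb
      exact (Finset.mem_filter.mp hb').2
    have hEcard : A.card ≤ E.card := by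
      have himg : A.image (· - b₀) ⊆ E := by
        intro x hx
        obtain ⟨a, ha, rfl⟩ := Finset.mem_image.mp hx
        exact hsub a ha
      calc A.card = (A.image (· - b₀)).card := by
            rw [Finset.card_image_of_injective]
            intro x y hxy
            have := congrArg (· + b₀) hxy
            simpa using this
      _ ≤ E.card := Finset.card_le_card himg
    have hEne : E.Nonempty := by
      obtain ⟨a, ha⟩ := hAne
      exact ⟨a - b₀, hsub a ha⟩
    have hBE : B + E ⊆ A := by
      intro x hx
      rw [Finset.mem_add] at hx
      obtain ⟨b, hb, e2, he2, rfl⟩ := hx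
      rw [hE, Finset.mem_filter] at he2
      exact he2.2 b hb
    have hCD : min p (B.card + E.card - 1) ≤ (B + E).card :=
      ZMod.cauchy_davenport hp ⟨b₀, hb₀⟩ hEne
    have hBEA : (B + E).card ≤ A.card := Finset.card_le_card hBE
    rcases le_total p (B.card + E.card - 1) with h | h
    · rw [min_eq_left h] at hCD
      omega
    · rw [min_eq_right h] at hCD
      omega

end PollardSetup

/-- **Pollard's theorem** in `ZMod p`. -/
lemma pollard_zmod {p : ℕ} [NeZero p] (hp : p.Prime) (A B : Finset (ZMod p)) (t : ℕ)
    (htA : t ≤ A.card) (htB : t ≤ B.card) :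
    t * min p (A.card + B.card - t) ≤
      ∑ c : ZMod p, min t (((A ×ˢ B).filter fun x => x.1 + x.2 = c).card) := by
  classical
  have hpair : ∀ c : ZMod p,
      ((A ×ˢ B).filter fun x => x.1 + x.2 = c).card = psiCount A B c := by
    intro c
    unfold psiCount
    apply Finset.card_bij (fun x _ => x.2)
    · intro a ha
      simp only [Finset.mem_filter, Finset.mem_product] at ha
      rw [Finset.mem_filter]
      refine ⟨ha.1.2, ?_⟩
      have : c - a.2 = a.1 := by rw [← ha.2]; ring
      rw [this]; exact ha.1.1
    · intro a ha b hb hab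
      simp only [Finset.mem_filter, Finset.mem_product] at ha hb
      have h1 : a.1 = b.1 := by
        have := ha.2.trans hb.2.symm
        rw [hab] at this
        exact add_right_cancel this
      exact Prod.ext h1 hab
    · intro b hb
      rw [Finset.mem_filter] at hb
      refine ⟨(c - b, b), ?_, rfl⟩
      simp only [Finset.mem_filter, Finset.mem_product]
      exact ⟨⟨hb.2, hb.1⟩, by ring⟩
  have := pollard_aux hp B.card A B t rfl htA htB
  calc t * min p (A.card + B.card - t) ≤ ∑ c : ZMod p, min t (psiCount A B c) := this
  _ = ∑ c : ZMod p, min t (((A ×ˢ B).filter fun x => x.1 + x.2 = c).card) :=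
      Finset.sum_congr rfl (fun c _ => by rw [hpair c])

theorem schur_triples_bound {p : ℕ} (hp : p.Prime) (D : Finset (ZMod p))
    (hodd : Odd D.card) (hsize : (D.card : ℝ) ≤ (2 * p + 1) / 3) :
    (((D ×ˢ D).filter fun t => t.1 - t.2 ∈ D).card : ℝ) ≤
      3 / 4 * (D.card : ℝ) ^ 2 + 1 / 4 := by
  haveI : Fact p.Prime := ⟨hp⟩
  haveI : NeZero p := ⟨hp.pos.ne'⟩
  obtain ⟨n, hn⟩ := hodd
  set m := D.card with hm
  -- the "sum representation" count
  set r : ZMod p → ℕ := fun c => ((D ×ˢ D).filter fun x => x.1 + x.2 = c).card with hr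
  -- Step 1 : the Schur-triple count equals the count of pairs with sum in D
  have hT1 : ((D ×ˢ D).filter fun t => t.1 - t.2 ∈ D).card
      = ((D ×ˢ D).filter fun x => x.1 + x.2 ∈ D).card := by
    apply Finset.card_bij' (fun x _ => (x.2, x.1 - x.2)) (fun x _ => (x.1 + x.2, x.1))
    · intro a ha; simp
    · intro a ha; simp
    · intro a ha
      simp only [Finset.mem_filter, Finset.mem_product] at ha ⊢
      refine ⟨⟨ha.1.2, ha.2⟩, ?_⟩
      simpa using ha.1.1
    · intro a ha
      simp only [Finset.mem_filter, Finset.mem_product] at ha ⊢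
      refine ⟨⟨ha.2, ha.1.1⟩, ?_⟩
      simpa using ha.1.2
  -- Step 2 : fiberwise decomposition over the sum
  have hT2 : ((D ×ˢ D).filter fun x => x.1 + x.2 ∈ D).card = ∑ c ∈ D, r c := by
    rw [Finset.card_eq_sum_card_fiberwise
      (f := fun x : ZMod p × ZMod p => x.1 + x.2) (t := D)
      (s := (D ×ˢ D).filter fun x => x.1 + x.2 ∈ D)
      (fun x hx => (Finset.mem_filter.mp (Finset.mem_coe.mp hx)).2)]
    refine Finset.sum_congr rfl fun c hc => ?_
    rw [Finset.filter_filter]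
    congr 1
    apply Finset.filter_congr
    intro x hx
    constructor
    · intro h; exact h.2
    · intro h; exact ⟨by show x.1 + x.2 ∈ D; rw [h]; exact hc, h⟩
  -- Step 3 : total mass
  have hTot : ∑ c : ZMod p, r c = m ^ 2 := by
    rw [← Finset.card_eq_sum_card_fiberwise
      (f := fun x : ZMod p × ZMod p => x.1 + x.2) (t := Finset.univ)
      (fun x _ => Finset.mem_univ _)]
    rw [Finset.card_product, sq]
  -- Step 4 : split the total over D and its complement
  have hsplit : ∑ c ∈ D, r c + ∑ c ∈ Dᶜ, r c = m ^ 2 := by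
    rw [Finset.sum_add_sum_compl, hTot]
  -- each r c is the size of an intersection, hence `2m ≤ r c + p`
  have hlow : ∀ c : ZMod p, 2 * m ≤ r c + p := by
    intro c
    classical
    set E := D.image (fun y => c - y) with hE
    have hEcard : E.card = m := by
      rw [hE]
      apply Finset.card_image_of_injective
      intro a b hab
      simpa using hab
    have hrc : r c = (D ∩ E).card := by
      apply Finset.card_bij (fun x _ => x.1)
      · intro a ha
        simp only [Finset.mem_filter, Finset.mem_product] at ha
        rw [Finset.mem_inter]
        refine ⟨ha.1.1, ?_⟩
        rw [hE, Finset.mem_image]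
        exact ⟨a.2, ha.1.2, by rw [← ha.2]; ring⟩
      · intro a ha b hb hab
        simp only [Finset.mem_filter, Finset.mem_product] at ha hb
        have h2 : a.2 = b.2 := by
          have := ha.2.trans hb.2.symm
          rw [hab] at this
          exact add_left_cancel this
        exact Prod.ext hab h2
      · intro b hb
        rw [Finset.mem_inter, hE, Finset.mem_image] at hb
        obtain ⟨hbD, y, hy, hyb⟩ := hb
        refine ⟨(b, y), ?_, rfl⟩
        simp only [Finset.mem_filter, Finset.mem_product]
        exact ⟨⟨hbD, hy⟩, by rw [← hyb]; ring⟩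
    have hunion : (D ∪ E).card ≤ p := by
      calc (D ∪ E).card ≤ Fintype.card (ZMod p) := Finset.card_le_univ _
      _ = p := ZMod.card p
    have := Finset.card_inter_add_card_union D E
    omega
  -- basic size facts
  have hmp : m ≤ p := by
    calc m ≤ Fintype.card (ZMod p) := Finset.card_le_univ _
    _ = p := ZMod.card p
  have hcompl : Dᶜ.card = p - m := by
    rw [Finset.card_compl, ZMod.card p]
  -- from the size hypothesis : 3 * m ≤ 2 * p + 1
  have hsize' : 3 * m ≤ 2 * p + 1 := by
    have h3 : (3 : ℝ) * m ≤ 2 * p + 1 := by linarith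
    exact_mod_cast h3
  have hp31 : 3 * n + 1 ≤ p := by omega
  -- Main counting bound in ℕ : T + n*(n+1) ≤ m^2
  have key : ((D ×ˢ D).filter fun t => t.1 - t.2 ∈ D).card + n * (n + 1) ≤ m ^ 2 := by
    rw [hT1, hT2]
    rcases eq_or_lt_of_le hp31 with hpeq | hpgt
    · -- case p = 3n+1 : every r c ≥ 2m - p = n+1
      have hX : n * (n + 1) ≤ ∑ c ∈ Dᶜ, r c := by
        have hcard : Dᶜ.card = n := by omega
        calc n * (n + 1) = Dᶜ.card * (n + 1) := by rw [hcard]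
        _ = ∑ _c ∈ Dᶜ, (n + 1) := by rw [Finset.sum_const, smul_eq_mul]
        _ ≤ ∑ c ∈ Dᶜ, r c := by
          apply Finset.sum_le_sum
          intro c _
          have := hlow c
          omega
      omega
    · -- case p ≥ 3n+2 : use Pollard's theorem with t = n
      have hpol := pollard_zmod hp D D n (by omega) (by omega)
      have hmin : min p (D.card + D.card - n) = 3 * n + 2 := by
        have : D.card + D.card - n = 3 * n + 2 := by omega
        rw [this]
        omega
      rw [hmin] at hpol
      -- split Pollard's sum
      have hps : ∑ c : ZMod p, min n (r c) = ∑ c ∈ D, min n (r c) + ∑ c ∈ Dᶜ, min n (r c) :=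
        (Finset.sum_add_sum_compl D _).symm
      have hD1 : ∑ c ∈ D, min n (r c) ≤ n * m := by
        calc ∑ c ∈ D, min n (r c) ≤ ∑ c ∈ D, n :=
          Finset.sum_le_sum (fun c _ => min_le_left _ _)
        _ = m * n := by rw [Finset.sum_const, smul_eq_mul]
        _ = n * m := mul_comm _ _
      have hD2 : ∑ c ∈ Dᶜ, min n (r c) ≤ ∑ c ∈ Dᶜ, r c :=
        Finset.sum_le_sum (fun c _ => min_le_right _ _)
      have hX : n * (n + 1) ≤ ∑ c ∈ Dᶜ, r c := by
        have h1 : n * (3 * n + 2) ≤ n * m + ∑ c ∈ Dᶜ, r c := by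
          calc n * (3 * n + 2) ≤ ∑ c : ZMod p, min n (r c) := hpol
          _ = ∑ c ∈ D, min n (r c) + ∑ c ∈ Dᶜ, min n (r c) := hps
          _ ≤ n * m + ∑ c ∈ Dᶜ, r c := Nat.add_le_add hD1 hD2
        have h2 : n * (3 * n + 2) = n * m + n * (n + 1) := by
          rw [hn]; ring
        omega
      omega
  -- conclude over ℝ
  have hcast : (((D ×ˢ D).filter fun t => t.1 - t.2 ∈ D).card : ℝ) + n * (n+1) ≤ (m : ℝ) ^ 2 := by
    exact_mod_cast key
  have hmr : (m : ℝ) = 2 * n + 1 := by exact_mod_cast congrArg (Nat.cast : ℕ → ℝ) hn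
  nlinarith [hcast, hmr]
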